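/- arXiv:math/0508041 — 2 statements merged into one kernel-verified Lean document; each statement's English description precedes it below -/
import Mathlib

section
/- The left peak polynomial W_n^{(ℓ)}(t) = Σ_{π ∈ S_n} t^{lpe(π)} satisfies W_n^{(ℓ)}(4t/(1+t)^2) = B_n(t)/(1+t)^n, where B_n(t) = Σ_{π ∈ B_n} t^{des_B(π)} is the type B Eulerian polynomial. -/
open scoped Classical

noncomputable section

/-- The value of `π` at the 1-based position `i`, with the convention
`π(0) = π(n+1) = 0` and values in `{1, …, n}`. -/
def pval {n : ℕ} (π : Equiv.Perm (Fin n)) (i : ℕ) : ℕ :=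
  if h : 1 ≤ i ∧ i ≤ n then ((π ⟨i - 1, by omega⟩ : Fin n) : ℕ) + 1 else 0

/-- The descent set of `π`: positions `1 ≤ s ≤ n-1` with `π(s) > π(s+1)`. -/
def desSet {n : ℕ} (π : Equiv.Perm (Fin n)) : Finset ℕ :=
  (Finset.Ico 1 n).filter fun s => pval π (s + 1) < pval π s

/-- The descent number of `π`. -/
def des {n : ℕ} (π : Equiv.Perm (Fin n)) : ℕ := (desSet π).card

/-- `i` is a peak of `π` (with the convention `π(0) = π(n+1) = 0`). -/
def isPk {n : ℕ} (π : Equiv.Perm (Fin n)) (i : ℕ) : Prop :=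
  pval π (i - 1) < pval π i ∧ pval π (i + 1) < pval π i

/-- Interior peak set: peaks `i` with `1 < i < n`. -/
def intPk {n : ℕ} (π : Equiv.Perm (Fin n)) : Finset ℕ :=
  (Finset.Ioo 1 n).filter (isPk π)

/-- Left peak set: peaks `i` with `1 ≤ i < n`. -/
def leftPk {n : ℕ} (π : Equiv.Perm (Fin n)) : Finset ℕ :=
  (Finset.Ico 1 n).filter (isPk π)

/-- Right peak set: peaks `i` with `1 < i ≤ n`. -/
def rightPk {n : ℕ} (π : Equiv.Perm (Fin n)) : Finset ℕ :=
  (Finset.Ioc 1 n).filter (isPk π)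

/-- Exterior peak set: peaks `i` with `1 ≤ i ≤ n`. -/
def extPk {n : ℕ} (π : Equiv.Perm (Fin n)) : Finset ℕ :=
  (Finset.Icc 1 n).filter (isPk π)



/-- A signed permutation of `{±1, …, ±n}`: a bijection `π : ℤ → ℤ` with
`π(-i) = -π(i)` that fixes every integer of absolute value greater than `n`. -/
def IsSignedPerm (n : ℕ) (π : Equiv.Perm ℤ) : Prop :=
  (∀ i : ℤ, π (-i) = -π i) ∧ ∀ i : ℤ, (n : ℤ) < |i| → π i = i

/-- The hyperoctahedral group `B_n`, realized as a subgroup of `Equiv.Perm ℤ`. -/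
def Bgroup (n : ℕ) : Subgroup (Equiv.Perm ℤ) where
  carrier := {π | IsSignedPerm n π}
  one_mem' := ⟨fun i => by simp, fun i _ => rfl⟩
  mul_mem' := fun {a b} ha hb =>
    ⟨fun i => by simp only [Equiv.Perm.mul_apply, hb.1 i, ha.1 (b i)],
     fun i hi => by simp only [Equiv.Perm.mul_apply, hb.2 i hi, ha.2 i hi]⟩
  inv_mem' := fun {a} ha =>
    ⟨fun i => by rw [Equiv.Perm.inv_eq_iff_eq, ha.1, Equiv.Perm.coe_inv, Equiv.apply_symm_apply],
     fun i hi => by rw [Equiv.Perm.inv_eq_iff_eq]; exact (ha.2 i hi).symm⟩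

/-- The type B descent set of `π`: positions `0 ≤ s ≤ n-1` with `π(s) > π(s+1)`. -/
def desSetB (n : ℕ) (π : Equiv.Perm ℤ) : Finset ℕ :=
  (Finset.range n).filter fun s => π ((s : ℤ) + 1) < π (s : ℤ)

/-- The type B descent number. -/
def desB (n : ℕ) (π : Equiv.Perm ℤ) : ℕ := (desSetB n π).card


namespace Aux
open PowerSeries


def bs (b : Bool) : ℤ := if b then 1 else -1

def ndes : ℤ → List ℤ → ℕ
  | _, [] => 0
  | p, a :: l => (if a < p then 1 else 0) + ndes a l

/-- `npk2 x y l` = number of interior peaks of the word `x :: y :: l`. -/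
def npk2 : ℤ → ℤ → List ℤ → ℕ
  | _, _, [] => 0
  | x, y, c :: l => (if x < y ∧ c < y then 1 else 0) + npk2 y c l

/-- combined jF (false) / jT (true) -/
def jj : Bool → ℤ → List ℤ → ℕ
  | _, _, [] => 0
  | false, a, b :: l => if a < b then jj false b l else jj true b l + 1
  | true, a, b :: l => if a < b then jj false b l else jj true b l

def Ssum : ℤ → List ℤ → PowerSeries ℚ
  | _, [] => 1
  | p, a :: l => (if a < p then X else 1) * Ssum a l + (if -a < p then X else 1) * Ssum (-a) l

lemma z_unit : ((1 + X : PowerSeries ℚ)) * ((1+X:PowerSeries ℚ))⁻¹ = 1 := by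
  apply PowerSeries.mul_inv_cancel
  simp

lemma zn_unit (n : ℕ) : ((1 + X : PowerSeries ℚ)^n) * (((1+X:PowerSeries ℚ))^n)⁻¹ = 1 := by
  apply PowerSeries.mul_inv_cancel
  simp

lemma alg1 (k m : ℕ) :
    2 * X * (2 * (4*X*(((1+X:PowerSeries ℚ))^2)⁻¹)^k * (1+X)^m)
      = (4*X*(((1+X:PowerSeries ℚ))^2)⁻¹)^(k+1) * (1+X)^(m+2) := by
  have hz := zn_unit 2
  calc 2*X*(2*(4*X*(((1+X:PowerSeries ℚ))^2)⁻¹)^k*(1+X)^m)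
      = ((1+X)^2*(((1+X:PowerSeries ℚ))^2)⁻¹) * (4*X*(4*X*(((1+X))^2)⁻¹)^k*(1+X)^m) := by
        rw [hz]; ring
    _ = (4*X*(((1+X:PowerSeries ℚ))^2)⁻¹)^(k+1)*(1+X)^(m+2) := by rw [pow_succ]; ring

lemma core : ∀ (l : List ℤ) (a : ℤ), 0 < a → (∀ b ∈ l, 0 < b) →
    List.Chain' (· ≠ ·) (a :: l) →
    (Ssum a l + X * Ssum (-a) l
        = (4 * X * (((1+X:PowerSeries ℚ))^2)⁻¹) ^ (jj false a l) * (1+X) ^ (l.length + 1)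
      ∧ Ssum a l + Ssum (-a) l
        = 2 * (4 * X * (((1+X:PowerSeries ℚ))^2)⁻¹) ^ (jj true a l) * (1+X) ^ l.length) := by
  intro l
  induction l with
  | nil =>
    intro a _ _ _
    constructor <;> simp [Ssum, jj] <;> try ring
  | cons b l ih =>
    intro a ha hpos hch
    have hb : 0 < b := hpos b (by simp)
    have hab : a ≠ b := (List.isChain_cons_cons.mp hch).1
    have hch' : List.Chain' (· ≠ ·) (b :: l) := (List.isChain_cons_cons.mp hch).2
    have hpos' : ∀ c ∈ l, 0 < c := fun c hc => hpos c (by simp [hc])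
    obtain ⟨IH1, IH2⟩ := ih b hb hpos' hch'
    rcases lt_or_gt_of_ne hab with h | h
    · -- ascent : a < b
      have e1 : Ssum a (b :: l) = Ssum b l + X * Ssum (-b) l := by
        rw [Ssum, if_neg (show ¬ b < a by omega), if_pos (show -b < a by omega), one_mul]
      have e2 : Ssum (-a) (b :: l) = Ssum b l + X * Ssum (-b) l := by
        rw [Ssum, if_neg (show ¬ b < -a by omega), if_pos (show -b < -a by omega), one_mul]
      rw [e1, e2]
      constructor
      · have step : Ssum b l + X * Ssum (-b) l + X * (Ssum b l + X * Ssum (-b) l)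
            = (1+X) * (Ssum b l + X * Ssum (-b) l) := by ring
        rw [step, IH1, jj, if_pos h, List.length_cons]
        ring
      · have step : Ssum b l + X * Ssum (-b) l + (Ssum b l + X * Ssum (-b) l)
            = 2 * (Ssum b l + X * Ssum (-b) l) := by ring
        rw [step, IH1, jj, if_pos h, List.length_cons]
        ring
    · -- descent : b < a
      have e1 : Ssum a (b :: l) = X * Ssum b l + X * Ssum (-b) l := by
        rw [Ssum, if_pos (show b < a by omega), if_pos (show -b < a by omega)]
      have e2 : Ssum (-a) (b :: l) = Ssum b l + Ssum (-b) l := by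
        rw [Ssum, if_neg (show ¬ b < -a by omega), if_neg (show ¬ -b < -a by omega), one_mul,
          one_mul]
      rw [e1, e2]
      constructor
      · have step : X * Ssum b l + X * Ssum (-b) l + X * (Ssum b l + Ssum (-b) l)
            = 2 * X * (Ssum b l + Ssum (-b) l) := by ring
        rw [step, IH2, jj, if_neg (show ¬ a < b by omega), alg1, List.length_cons]
      · have step : X * Ssum b l + X * Ssum (-b) l + (Ssum b l + Ssum (-b) l)
            = (1 + X) * (Ssum b l + Ssum (-b) l) := by ring
        rw [step, IH2, jj, if_neg (show ¬ a < b by omega), List.length_cons]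
        ring

/-- peak count in context: if prev comparison was an ascent (x < y). -/
lemma jj_eq_npk : ∀ (l : List ℤ) (x y : ℤ), List.Chain' (· ≠ ·) (y :: l) →
    (x < y → jj false y l = npk2 x y l) ∧ (y < x → jj true y l = npk2 x y l) := by
  intro l
  induction l with
  | nil => intro x y _; simp [jj, npk2]
  | cons c l ih =>
    intro x y hch
    have hyc : y ≠ c := (List.isChain_cons_cons.mp hch).1
    have hch' : List.Chain' (· ≠ ·) (c :: l) := (List.isChain_cons_cons.mp hch).2
    constructor
    · intro hxy
      rw [jj, npk2]
      rcases lt_or_gt_of_ne hyc with h | h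
      · rw [if_pos h, if_neg (by omega), (ih y c hch').1 h, zero_add]
      · rw [if_neg (by omega), if_pos ⟨hxy, by omega⟩, (ih y c hch').2 (by omega)]
        omega
    · intro hxy
      rw [jj, npk2]
      rcases lt_or_gt_of_ne hyc with h | h
      · rw [if_pos h, if_neg (by omega), (ih y c hch').1 h, zero_add]
      · rw [if_neg (by omega), if_neg (by omega), (ih y c hch').2 (by omega), zero_add]


lemma range_map_succ (n : ℕ) (h : ℕ → ℤ) :
    (List.range (n+1)).map h = h 0 :: (List.range n).map (fun s => h (s+1)) := by
  rw [List.range_succ_eq_map, List.map_cons, List.map_map]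
  rfl

lemma ndes_count : ∀ (n : ℕ) (f : ℕ → ℤ),
    ((Finset.range n).filter (fun s => f (s+1) < f s)).card
      = ndes (f 0) ((List.range n).map (fun s => f (s+1))) := by
  intro n
  induction n with
  | zero => intro f; simp [ndes]
  | succ n ih =>
    intro f
    rw [Finset.card_filter, Finset.sum_range_succ', ← Finset.card_filter]
    rw [range_map_succ, ndes, ih (fun s => f (s+1))]
    omega

lemma npk2_count : ∀ (m : ℕ) (f : ℕ → ℤ),
    (∑ s ∈ Finset.range m, if f s < f (s+1) ∧ f (s+2) < f (s+1) then 1 else 0)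
      = npk2 (f 0) (f 1) ((List.range m).map (fun s => f (s+2))) := by
  intro m
  induction m with
  | zero => intro f; simp [npk2]
  | succ m ih =>
    intro f
    rw [Finset.sum_range_succ', range_map_succ, npk2, ih (fun s => f (s+1))]
    exact Nat.add_comm _ _

lemma pow_ite (c : Prop) [Decidable c] (k : ℕ) :
    (X : PowerSeries ℚ) ^ ((if c then 1 else 0) + k) = (if c then X else 1) * X ^ k := by
  by_cases h : c <;> simp [h, pow_succ] <;> ring

lemma sum_signs : ∀ (n : ℕ) (g : ℕ → ℤ) (p : ℤ),
    ∑ ε : Fin n → Bool, (X : PowerSeries ℚ) ^ ndes p (List.ofFn (fun i : Fin n => bs (ε i) * g (i : ℕ)))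
      = Ssum p ((List.range n).map g) := by
  intro n
  induction n with
  | zero =>
    intro g p
    simp [ndes, Ssum]
  | succ n ih =>
    intro g p
    rw [← Equiv.sum_comp (Fin.consEquiv (fun _ => Bool))
      (fun ε => (X : PowerSeries ℚ) ^ ndes p (List.ofFn (fun i : Fin (n+1) => bs (ε i) * g (i : ℕ))))]
    rw [Fintype.sum_prod_type, Fintype.sum_bool]
    have hword : ∀ (b : Bool) (ε : Fin n → Bool),
        List.ofFn (fun i : Fin (n+1) =>
          bs (((Fin.consEquiv (fun _ => Bool)) (b, ε)) i) * g (i : ℕ))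
          = (bs b * g 0) :: List.ofFn (fun i : Fin n => bs (ε i) * g ((i : ℕ)+1)) := by
      intro b ε
      rw [List.ofFn_succ]
      simp [Fin.consEquiv, Fin.cons_zero, Fin.cons_succ]
    have key : ∀ b : Bool,
        (∑ ε : Fin n → Bool, (X : PowerSeries ℚ) ^ ndes p (List.ofFn (fun i : Fin (n+1) =>
            bs (((Fin.consEquiv (fun _ => Bool)) (b, ε)) i) * g (i : ℕ))))
          = (if bs b * g 0 < p then X else 1) * Ssum (bs b * g 0) ((List.range n).map (fun s => g (s+1))) := by
      intro b
      rw [← ih (fun s => g (s+1)) (bs b * g 0), Finset.mul_sum]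
      apply Finset.sum_congr rfl
      intro ε _
      rw [hword, ndes, pow_ite]
    rw [key true, key false, range_map_succ, Ssum]
    simp [bs]

lemma bs_mul_self  (b : Bool) : bs b * bs b = 1 := by cases b <;> simp [bs]
lemma bs_natAbs (b : Bool) : (bs b).natAbs = 1 := by cases b <;> simp [bs]

def wf (n : ℕ) (σ : Equiv.Perm (Fin n)) (ε : Fin n → Bool) (m : ℕ) : ℤ :=
  if h : 1 ≤ m ∧ m ≤ n then
    bs (ε ⟨m-1, by omega⟩) * (((σ ⟨m-1, by omega⟩ : Fin n) : ℕ) + 1)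
  else (m : ℤ)

def Ffun (n : ℕ) (σ : Equiv.Perm (Fin n)) (ε : Fin n → Bool) : ℤ → ℤ :=
  fun i => i.sign * wf n σ ε i.natAbs

lemma Ffun_zero (n σ ε) : Ffun n σ ε 0 = 0 := by simp [Ffun]

lemma Ffun_neg (n σ ε) (i : ℤ) : Ffun n σ ε (-i) = - Ffun n σ ε i := by
  unfold Ffun
  rw [Int.natAbs_neg, Int.sign_neg]
  ring

lemma Ffun_pos (n σ ε) (m : ℕ) (h1 : 1 ≤ m) (h2 : m ≤ n) :
    Ffun n σ ε (m : ℤ) =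
      bs (ε ⟨m-1, by omega⟩) * (((σ ⟨m-1, by omega⟩ : Fin n) : ℕ) + 1) := by
  unfold Ffun
  have hs : ((m : ℤ)).sign = 1 := Int.sign_eq_one_of_pos (by exact_mod_cast h1)
  have ha : ((m : ℤ)).natAbs = m := Int.natAbs_natCast m
  rw [hs, ha, one_mul, wf, dif_pos ⟨h1, h2⟩]

lemma Ffun_out (n σ ε) (i : ℤ) (h : n < i.natAbs) : Ffun n σ ε i = i := by
  unfold Ffun
  rw [wf, dif_neg (by omega)]
  exact Int.sign_mul_natAbs i

lemma key (n : ℕ) (σ : Equiv.Perm (Fin n)) (ε : Fin n → Bool) (i : ℤ) :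
    Ffun n σ⁻¹ (fun j => ε (σ⁻¹ j)) (Ffun n σ ε i) = i := by
  have keyPos : ∀ m : ℕ, 1 ≤ m → m ≤ n →
      Ffun n σ⁻¹ (fun j => ε (σ⁻¹ j)) (Ffun n σ ε (m : ℤ)) = (m : ℤ) := by
    intro m h1 h2
    rw [Ffun_pos n σ ε m h1 h2]
    set j : Fin n := ⟨m-1, by omega⟩ with hj
    have hval : ((σ j : ℕ) : ℤ) + 1 = ((((σ j : ℕ) + 1 : ℕ)) : ℤ) := by push_cast; ring
    have h1' : 1 ≤ (σ j : ℕ) + 1 := by omega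
    have h2' : (σ j : ℕ) + 1 ≤ n := by have := (σ j).isLt; omega
    have hfin : (⟨(σ j : ℕ) + 1 - 1, by omega⟩ : Fin n) = σ j := by
      apply Fin.ext; simp
    have hpos := Ffun_pos n σ⁻¹ (fun j => ε (σ⁻¹ j)) ((σ j : ℕ) + 1) h1' h2'
    rw [hfin] at hpos
    simp only [show ∀ x, σ⁻¹ (σ x) = x from fun x => Equiv.symm_apply_apply σ x] at hpos
    cases hb : ε j with
    | true =>
      rw [hb] at hpos
      simp only [bs, if_true] at hpos ⊢
      rw [one_mul, hval, hpos, one_mul]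
      simp only [hj, Fin.val_mk]; omega
    | false =>
      rw [hb] at hpos
      simp only [bs, Bool.false_eq_true, if_false] at hpos ⊢
      rw [neg_one_mul, hval, Ffun_neg, hpos, neg_one_mul, neg_neg]
      simp only [hj, Fin.val_mk]; omega
  rcases Nat.eq_zero_or_pos i.natAbs with h0 | h1
  · have : i = 0 := by omega
    rw [this, Ffun_zero, Ffun_zero]
  rcases le_or_gt i.natAbs n with h2 | h2
  · rcases Int.natAbs_eq i with h | h
    · rw [h]; exact keyPos _ h1 h2
    · rw [h, Ffun_neg, Ffun_neg, keyPos _ h1 h2]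
  · rw [Ffun_out n σ ε i h2, Ffun_out n σ⁻¹ _ i h2]

def sg (n : ℕ) (σ : Equiv.Perm (Fin n)) (ε : Fin n → Bool) : Equiv.Perm ℤ :=
  ⟨Ffun n σ ε, Ffun n σ⁻¹ (fun j => ε (σ⁻¹ j)), key n σ ε, by
    intro j
    have h := key n σ⁻¹ (fun j => ε (σ⁻¹ j)) j
    rw [inv_inv] at h
    have he : (fun k => ε (σ⁻¹ (σ k))) = ε := by
      funext k; rw [show σ⁻¹ (σ k) = k from Equiv.symm_apply_apply σ k]
    rwa [he] at h⟩


def IsSignedPerm (n : ℕ) (π : Equiv.Perm ℤ) : Prop :=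
  (∀ i : ℤ, π (-i) = -π i) ∧ ∀ i : ℤ, (n : ℤ) < |i| → π i = i

lemma sg_isSigned (n σ ε) : IsSignedPerm n (sg n σ ε) := by
  constructor
  · intro i
    exact Ffun_neg n σ ε i
  · intro i hi
    apply Ffun_out
    rw [Int.abs_eq_natAbs] at hi
    exact_mod_cast hi

section InvSide
variable {n : ℕ} {π : Equiv.Perm ℤ}

lemma sp_zero (h : IsSignedPerm n π) : π 0 = 0 := by
  have := h.1 0
  rw [neg_zero] at this
  omega

lemma sp_ne (h : IsSignedPerm n π) {x : ℤ} (hx : x ≠ 0) : π x ≠ 0 := by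
  intro hc
  exact hx (π.injective (hc.trans (sp_zero h).symm))

lemma sp_abs_le (h : IsSignedPerm n π) {x : ℤ} (hx : x.natAbs ≤ n) : (π x).natAbs ≤ n := by
  by_contra hgt
  push_neg at hgt
  have h2 : π (π x) = π x := h.2 (π x) (by rw [Int.abs_eq_natAbs]; exact_mod_cast hgt)
  have := π.injective h2
  omega

lemma inv_bound (h : IsSignedPerm n π) (i : Fin n) :
    (π ((i : ℕ) + 1)).natAbs - 1 < n := by
  have hx : ((((i : ℕ) : ℤ)) + 1).natAbs ≤ n := by
    have := i.isLt
    omega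
  have h1 := sp_abs_le h hx
  have h2 : π (((i : ℕ) : ℤ) + 1) ≠ 0 := sp_ne h (by positivity)
  omega

def invσf (h : IsSignedPerm n π) : Fin n → Fin n :=
  fun i => ⟨(π ((i : ℕ) + 1)).natAbs - 1, inv_bound h i⟩

lemma invσf_inj (h : IsSignedPerm n π) : Function.Injective (invσf h) := by
  intro i j hij
  have h1 : π (((i : ℕ) : ℤ) + 1) ≠ 0 := sp_ne h (by positivity)
  have h2 : π (((j : ℕ) : ℤ) + 1) ≠ 0 := sp_ne h (by positivity)
  have heq : (π ((i : ℕ) + 1)).natAbs = (π ((j : ℕ) + 1)).natAbs := by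
    have := Fin.mk.injEq _ _ _ _ ▸ hij
    simp only [invσf, Fin.mk.injEq] at hij
    omega
  rcases Int.natAbs_eq_natAbs_iff.mp heq with he | he
  · have := π.injective he
    have : ((i : ℕ) : ℤ) = ((j : ℕ) : ℤ) := by omega
    exact Fin.ext (by exact_mod_cast this)
  · rw [← h.1 (((j : ℕ) : ℤ) + 1)] at he
    have := π.injective he
    omega

def invσ (h : IsSignedPerm n π) : Equiv.Perm (Fin n) :=
  Equiv.ofBijective _ ((Finite.injective_iff_bijective).mp (invσf_inj h))

lemma invσ_apply (h : IsSignedPerm n π) (i : Fin n) :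
    ((invσ h i : Fin n) : ℕ) = (π ((i : ℕ) + 1)).natAbs - 1 := rfl

end InvSide

lemma sg_right (n : ℕ) (π : Equiv.Perm ℤ) (h : IsSignedPerm n π) :
    sg n (invσ h) (fun i => decide (0 < π ((i : ℕ) + 1))) = π := by
  set σ' := invσ h
  set ε' : Fin n → Bool := fun i => decide (0 < π ((i : ℕ) + 1))
  apply Equiv.ext
  intro i
  show Ffun n σ' ε' i = π i
  have hPos : ∀ m : ℕ, 1 ≤ m → m ≤ n → Ffun n σ' ε' (m : ℤ) = π (m : ℤ) := by
    intro m h1 h2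
    rw [Ffun_pos n σ' ε' m h1 h2]
    set j : Fin n := ⟨m - 1, by omega⟩ with hj
    have harg : (((j : ℕ) : ℤ)) + 1 = (m : ℤ) := by
      simp only [hj]
      omega
    have hπj : π (((j : ℕ) : ℤ) + 1) = π (m : ℤ) := by rw [harg]
    have hne : π ((m : ℤ)) ≠ 0 := sp_ne h (by positivity)
    have hval : ((σ' j : ℕ) : ℤ) + 1 = (π (m : ℤ)).natAbs := by
      rw [invσ_apply h j, hπj]
      have : 1 ≤ (π ((m : ℤ))).natAbs := by omega
      omega
    have hbs : bs (ε' j) = Int.sign (π (m : ℤ)) := by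
      simp only [ε', hπj, bs]
      rcases lt_trichotomy (π ((m : ℤ))) 0 with hl | hl | hl
      · rw [Int.sign_eq_neg_one_of_neg hl, if_neg (by simp; omega)]
      · exact absurd hl hne
      · rw [Int.sign_eq_one_of_pos hl, if_pos (by simp [hl])]
    rw [hbs, hval]
    rw [Int.sign_mul_natAbs]
  rcases Nat.eq_zero_or_pos i.natAbs with h0 | h1
  · have : i = 0 := by omega
    rw [this, Ffun_zero, sp_zero h]
  rcases le_or_gt i.natAbs n with h2 | h2
  · rcases Int.natAbs_eq i with heq | heq
    · rw [heq]; exact hPos _ h1 h2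
    · rw [heq, Ffun_neg, hPos _ h1 h2, ← h.1]
  · rw [Ffun_out n σ' ε' i h2, h.2 i (by rw [Int.abs_eq_natAbs]; exact_mod_cast h2)]


lemma sg_val (n σ ε) (i : Fin n) :
    sg n σ ε (((i : ℕ) : ℤ) + 1) = bs (ε i) * (((σ i : Fin n) : ℕ) + 1) := by
  have harg : ((((i : ℕ)) : ℤ) + 1) = ((((i : ℕ) + 1 : ℕ)) : ℤ) := by push_cast; ring
  show Ffun n σ ε _ = _
  rw [harg, Ffun_pos n σ ε ((i : ℕ) + 1) (by omega) (by have := i.isLt; omega)]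
  have hfin : (⟨(i : ℕ) + 1 - 1, by have := i.isLt; omega⟩ : Fin n) = i := by
    apply Fin.ext; simp
  rw [hfin]

def BEquiv (n : ℕ) :
    (Equiv.Perm (Fin n) × (Fin n → Bool)) ≃ {π : Equiv.Perm ℤ // IsSignedPerm n π} where
  toFun p := ⟨sg n p.1 p.2, sg_isSigned n p.1 p.2⟩
  invFun q := (invσ q.2, fun i => decide (0 < (q.1 : Equiv.Perm ℤ) ((i : ℕ) + 1)))
  left_inv p := by
    refine Prod.ext ?_ ?_
    · apply Equiv.ext
      intro i
      apply Fin.ext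
      show ((sg n p.1 p.2 (((i : ℕ) : ℤ) + 1)).natAbs - 1) = ((p.1 i : Fin n) : ℕ)
      rw [sg_val n p.1 p.2 i, Int.natAbs_mul, bs_natAbs, one_mul]
      omega
    · funext i
      show decide (0 < sg n p.1 p.2 (((i : ℕ) : ℤ) + 1)) = p.2 i
      rw [sg_val n p.1 p.2 i]
      cases hb : p.2 i with
      | true =>
        simp only [bs, if_true, one_mul, decide_eq_true_iff]
        positivity
      | false =>
        simp only [bs, Bool.false_eq_true, if_false, neg_one_mul]
        simp only [decide_eq_false_iff_not]
        omega
  right_inv q := Subtype.ext (sg_right n q.1 q.2)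


lemma ofFn_eq_range_map : ∀ (n : ℕ) (h : ℕ → ℤ),
    List.ofFn (fun i : Fin n => h (i : ℕ)) = (List.range n).map h := by
  intro n
  induction n with
  | zero => intro h; simp
  | succ n ih =>
    intro h
    rw [List.ofFn_succ, range_map_succ, ← ih (fun s => h (s+1))]
    rfl

lemma mem_Bgroup {n : ℕ} {π : Equiv.Perm ℤ} : π ∈ Bgroup n ↔ IsSignedPerm n π := Iff.rfl

def BEquiv' (n : ℕ) : (Equiv.Perm (Fin n) × (Fin n → Bool)) ≃ ↥(Bgroup n) :=
  (BEquiv n).trans (Equiv.subtypeEquivRight (fun _ => mem_Bgroup.symm))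

lemma desB_sg (n : ℕ) (σ : Equiv.Perm (Fin n)) (ε : Fin n → Bool) :
    desB n (sg n σ ε)
      = ndes 0 (List.ofFn (fun i : Fin n => bs (ε i) * ((((σ i : Fin n) : ℕ) : ℤ) + 1))) := by
  have harg : ∀ s : ℕ, ((s+1 : ℕ) : ℤ) = (s : ℤ) + 1 := by intro s; push_cast; ring
  have h1 : desB n (sg n σ ε)
      = ((Finset.range n).filter
          (fun s => (fun t : ℕ => sg n σ ε ((t : ℕ) : ℤ)) (s+1)
            < (fun t : ℕ => sg n σ ε ((t : ℕ) : ℤ)) s)).card := by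
    unfold desB desSetB
    congr 1
  rw [h1, ndes_count n (fun t : ℕ => sg n σ ε ((t : ℕ) : ℤ))]
  have h0 : sg n σ ε (((0:ℕ) : ℕ) : ℤ) = 0 := Ffun_zero n σ ε
  rw [h0, ← ofFn_eq_range_map n (fun s => sg n σ ε ((s+1 : ℕ) : ℤ))]
  have hfun : (fun i : Fin n => sg n σ ε ((((i : ℕ) + 1 : ℕ)) : ℤ))
      = fun i : Fin n => bs (ε i) * ((((σ i : Fin n) : ℕ) : ℤ) + 1) := by
    funext i
    rw [harg ((i : ℕ)), sg_val n σ ε i]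
  rw [hfun]

lemma per_sigma (n : ℕ) (σ : Equiv.Perm (Fin n)) :
    ∑ ε : Fin n → Bool, (X : PowerSeries ℚ) ^ desB n (sg n σ ε)
      = (4 * X * (((1 + X : PowerSeries ℚ)) ^ 2)⁻¹) ^ (leftPk σ).card * (1 + X) ^ n := by
  simp only [desB_sg]
  set g : ℕ → ℤ := fun s => if h : s < n then (((σ ⟨s, h⟩ : Fin n) : ℕ) : ℤ) + 1 else 1 with hg
  have hword : ∀ ε : Fin n → Bool,
      List.ofFn (fun i : Fin n => bs (ε i) * ((((σ i : Fin n) : ℕ) : ℤ) + 1))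
        = List.ofFn (fun i : Fin n => bs (ε i) * g (i : ℕ)) := by
    intro ε
    have hf : (fun i : Fin n => bs (ε i) * ((((σ i : Fin n) : ℕ) : ℤ) + 1))
        = (fun i : Fin n => bs (ε i) * g (i : ℕ)) := by
      funext i
      have hgi : g (i : ℕ) = (((σ i : Fin n) : ℕ) : ℤ) + 1 := by
        simp only [hg]
        rw [dif_pos i.isLt]
      rw [hgi]
    rw [hf]
  simp only [hword]
  rw [sum_signs n g 0]
  rcases Nat.eq_zero_or_pos n with hn | hn
  · subst hn
    have hL : leftPk σ = ∅ := by
      unfold leftPk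
      rw [Finset.Ico_eq_empty (by omega), Finset.filter_empty]
    rw [hL]
    simp [Ssum]
  obtain ⟨k, rfl⟩ : ∃ k, n = k + 1 := ⟨n - 1, by omega⟩
  set f : ℕ → ℤ := fun s => ((pval σ s : ℕ) : ℤ) with hfdef
  have hfpos : ∀ s, 1 ≤ s → s ≤ k + 1 → 0 < f s := by
    intro s h1 h2
    show (0 : ℤ) < ((pval σ s : ℕ) : ℤ)
    rw [pval, dif_pos ⟨h1, h2⟩]
    positivity
  have hfval : ∀ s (hs : s < k + 1), f (s + 1) = (((σ ⟨s, hs⟩ : Fin (k+1)) : ℕ) : ℤ) + 1 := by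
    intro s hs
    show ((pval σ (s+1) : ℕ) : ℤ) = _
    rw [pval, dif_pos ⟨by omega, by omega⟩]
    push_cast
    rfl
  have hmap : (List.range (k+1)).map g = (List.range (k+1)).map (fun s => f (s+1)) := by
    apply List.map_congr_left
    intro s hs
    rw [List.mem_range] at hs
    simp only [hg]
    rw [dif_pos hs, hfval s hs]
  have hsplit : (List.range (k+1)).map (fun s => f (s+1))
      = f 1 :: (List.range k).map (fun s => f (s+2)) := by
    rw [range_map_succ k (fun s => f (s+1))]
  set t : List ℤ := (List.range k).map (fun s => f (s+2)) with ht
  have htpos : ∀ b ∈ t, 0 < b := by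
    intro b hb
    rw [ht, List.mem_map] at hb
    obtain ⟨s, hs, rfl⟩ := hb
    rw [List.mem_range] at hs
    exact hfpos (s+2) (by omega) (by omega)
  have hnd0 : ((List.range (k+1)).map (fun s => f (s+1))).Nodup := by
    apply List.Nodup.map_on ?_ (List.nodup_range (n := k+1))
    intro x hx y hy hxy
    rw [List.mem_range] at hx hy
    rw [hfval x hx, hfval y hy] at hxy
    have : (σ ⟨x, hx⟩ : Fin (k+1)) = σ ⟨y, hy⟩ := by
      apply Fin.ext
      omega
    exact congrArg Fin.val (σ.injective this)
  rw [hsplit] at hnd0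
  have hch : List.Chain' (· ≠ ·) (f 1 :: t) := List.Pairwise.isChain hnd0
  have hf1 : 0 < f 1 := hfpos 1 (le_refl 1) (by omega)
  rw [hmap, hsplit, Ssum, if_neg (show ¬ f 1 < 0 by omega),
    if_pos (show -f 1 < 0 by omega), one_mul]
  obtain ⟨C1, _⟩ := core t (f 1) hf1 htpos hch
  rw [C1]
  have hf0 : f 0 = 0 := by
    show ((pval σ 0 : ℕ) : ℤ) = 0
    rw [pval, dif_neg (by omega)]
    rfl
  have hlpk : (leftPk σ).card = npk2 (f 0) (f 1) t := by
    unfold leftPk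
    rw [Finset.card_filter, Finset.sum_Ico_eq_sum_range]
    simp only [Nat.add_sub_cancel]
    have step : ∀ s ∈ Finset.range k,
        (if isPk σ (1+s) then (1:ℕ) else 0)
          = (if f s < f (s+1) ∧ f (s+2) < f (s+1) then 1 else 0) := by
      intro s hs
      have hiff : isPk σ (1+s) ↔ (f s < f (s+1) ∧ f (s+2) < f (s+1)) := by
        simp only [hfdef]
        unfold isPk
        rw [show 1+s-1 = s from by omega, show 1+s+1 = s+2 from by omega,
          show 1+s = s+1 from by omega]
        simp [Nat.cast_lt]
      rw [if_congr hiff rfl rfl]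
    rw [Finset.sum_congr rfl step, npk2_count k f]
  have hjj : jj false (f 1) t = (leftPk σ).card := by
    rw [(jj_eq_npk t (f 0) (f 1) hch).1 (by omega), hlpk]
  rw [hjj, ht]
  simp


end Aux

open PowerSeries in
theorem stmt13 (n : ℕ) :
    ∑ π : Equiv.Perm (Fin n),
        ((4 : PowerSeries ℚ) * X * (((1 + X) ^ 2)⁻¹)) ^ (leftPk π).card =
      ((1 + X) ^ n)⁻¹ *
        ∑ᶠ π : ↥(Bgroup n), (X : PowerSeries ℚ) ^ desB n (π : Equiv.Perm ℤ) := by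
  haveI : Fintype ↥(Bgroup n) := Fintype.ofEquiv _ (Aux.BEquiv' n)
  rw [finsum_eq_sum_of_fintype]
  rw [← Equiv.sum_comp (Aux.BEquiv' n)
    (fun q : ↥(Bgroup n) => (X : PowerSeries ℚ) ^ desB n (q : Equiv.Perm ℤ))]
  have hcoe : ∀ p : Equiv.Perm (Fin n) × (Fin n → Bool),
      ((Aux.BEquiv' n p : ↥(Bgroup n)) : Equiv.Perm ℤ) = Aux.sg n p.1 p.2 := fun p => rfl
  simp only [hcoe]
  rw [Fintype.sum_prod_type]
  have hsum : (∑ σ : Equiv.Perm (Fin n), ∑ ε : Fin n → Bool,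
        (X : PowerSeries ℚ) ^ desB n (Aux.sg n σ ε))
      = ∑ σ : Equiv.Perm (Fin n),
          ((4 : PowerSeries ℚ) * X * (((1 + X) ^ 2)⁻¹)) ^ (leftPk σ).card * (1 + X) ^ n :=
    Finset.sum_congr rfl (fun σ _ => Aux.per_sigma n σ)
  have hu : ∀ A : PowerSeries ℚ, ((1 + X : PowerSeries ℚ) ^ n)⁻¹ * (A * (1 + X) ^ n) = A := by
    intro A
    rw [mul_comm, mul_assoc, Aux.zn_unit n, mul_one]
  rw [hsum, ← Finset.sum_mul, hu]
end
end

section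
/- The number of signed permutations of [n] with exactly i+1 cyclic descents equals 2^n times the number of (unsigned) permutations of [n] with exactly i descents, for all 0 ≤ i ≤ n-1. Equivalently, B_n^{(c)}(t) = 2^n A_n(t). -/
open scoped Classical

noncomputable section

/-- The type B cyclic descent number: `des_B(π)` plus one more if `π(n) > 0`. -/
def cdesB (n : ℕ) (π : Equiv.Perm ℤ) : ℕ :=
  desB n π + (if 0 < π (n : ℤ) then 1 else 0)

namespace Aux14

variable {n : ℕ}

/-- sign-decorated value: `iota ε v = ±(v+1)`, negative iff `ε v = true`. -/
def iota (ε : Fin n → Bool) (v : Fin n) : ℤ :=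
  if ε v then -((v : ℕ) + 1 : ℤ) else ((v : ℕ) + 1 : ℤ)

lemma iota_natAbs (ε : Fin n → Bool) (v : Fin n) : (iota ε v).natAbs = (v : ℕ) + 1 := by
  unfold iota; split <;> omega

lemma iota_ne_zero (ε : Fin n → Bool) (v : Fin n) : iota ε v ≠ 0 := by
  intro h
  have := iota_natAbs ε v
  omega

lemma iota_injective (ε : Fin n → Bool) : Function.Injective (iota ε) := by
  intro a b h
  have ha := iota_natAbs ε a
  have hb := iota_natAbs ε b
  rw [h] at ha
  exact Fin.ext (by omega)

lemma iota_pos_iff (ε : Fin n → Bool) (v : Fin n) : 0 < iota ε v ↔ ε v = false := by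
  unfold iota; split <;> simp_all <;> omega

/-- The set of values `{0} ∪ {iota ε v}`. -/
def Aset (ε : Fin n → Bool) : Finset ℤ := insert 0 (Finset.univ.image (iota ε))

lemma zero_mem_Aset (ε : Fin n → Bool) : (0 : ℤ) ∈ Aset ε := Finset.mem_insert_self _ _

lemma iota_mem_Aset (ε : Fin n → Bool) (v : Fin n) : iota ε v ∈ Aset ε :=
  Finset.mem_insert_of_mem (Finset.mem_image_of_mem _ (Finset.mem_univ v))

lemma card_Aset (ε : Fin n → Bool) : (Aset ε).card = n + 1 := by
  unfold Aset
  rw [Finset.card_insert_of_notMem, Finset.card_image_of_injective _ (iota_injective ε),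
    Finset.card_univ, Fintype.card_fin]
  simp only [Finset.mem_image, Finset.mem_univ, true_and]
  rintro ⟨v, hv⟩
  exact iota_ne_zero ε v hv

/-- Order isomorphism ranking the values. -/
def eIso (ε : Fin n → Bool) : Fin (n + 1) ≃o {x // x ∈ Aset ε} :=
  (Aset ε).orderIsoOfFin (card_Aset ε)

/-- The cyclic word `0, iota ε (σ 0), …, iota ε (σ (n-1))` valued in `Aset ε`. -/
def cfun (ε : Fin n → Bool) (σ : Equiv.Perm (Fin n)) (i : Fin (n + 1)) : {x // x ∈ Aset ε} :=
  if h : i = 0 then ⟨0, zero_mem_Aset ε⟩ else ⟨iota ε (σ (i.pred h)), iota_mem_Aset ε _⟩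

lemma cfun_injective (ε : Fin n → Bool) (σ : Equiv.Perm (Fin n)) :
    Function.Injective (cfun ε σ) := by
  intro a b h
  unfold cfun at h
  split at h <;> split at h <;> rename_i ha hb
  · rw [ha, hb]
  · exact absurd (Subtype.ext_iff.mp h).symm (iota_ne_zero ε _)
  · exact absurd (Subtype.ext_iff.mp h) (iota_ne_zero ε _)
  · have h1 : a.pred ha = b.pred hb := σ.injective (iota_injective ε (Subtype.ext_iff.mp h))
    rw [← Fin.succ_pred a ha, ← Fin.succ_pred b hb, h1]


/-- The rank word: a permutation of `Fin (n+1)`. -/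
def dperm (ε : Fin n → Bool) (σ : Equiv.Perm (Fin n)) : Equiv.Perm (Fin (n + 1)) :=
  Equiv.ofBijective (fun i => (eIso ε).symm (cfun ε σ i))
    (Finite.injective_iff_bijective.mp ((eIso ε).toEquiv.symm.injective.comp (cfun_injective ε σ)))

lemma dperm_apply (ε : Fin n → Bool) (σ : Equiv.Perm (Fin n)) (i : Fin (n + 1)) :
    dperm ε σ i = (eIso ε).symm (cfun ε σ i) := rfl

lemma dperm_zero (ε : Fin n → Bool) (σ : Equiv.Perm (Fin n)) :
    dperm ε σ 0 = (eIso ε).symm ⟨0, zero_mem_Aset ε⟩ := by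
  simp [dperm_apply, cfun]

/-- Encoding of signed positions: `(b, j) ↦ ∓(j+1)`. -/
def encE : (Bool × Fin n) ≃ {i : ℤ // i ≠ 0 ∧ i.natAbs ≤ n} where
  toFun x := ⟨if x.1 then -((x.2 : ℕ) + 1 : ℤ) else ((x.2 : ℕ) + 1 : ℤ), by
    have := x.2.isLt
    constructor
    · split <;> omega
    · split <;> omega⟩
  invFun y := (decide (y.1 < 0), ⟨y.1.natAbs - 1, by have := y.2; omega⟩)
  left_inv := by
    rintro ⟨b, j⟩
    have hj := j.isLt
    simp only [Prod.mk.injEq]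
    cases b <;> simp [Fin.ext_iff] <;> omega
  right_inv := by
    rintro ⟨i, hi⟩
    apply Subtype.ext
    dsimp only [decide_eq_true_eq]
    split <;> rename_i hd
    · rw [decide_eq_true_eq] at hd; omega
    · rw [decide_eq_true_eq] at hd; omega

/-- The core permutation on signed positions. -/
def pPerm (ε : Fin n → Bool) (σ : Equiv.Perm (Fin n)) : Equiv.Perm (Bool × Fin n) where
  toFun x := (xor x.1 (ε (σ x.2)), σ x.2)
  invFun x := (xor x.1 (ε x.2), σ.symm x.2)
  left_inv := by rintro ⟨b, j⟩; simp [Bool.xor_assoc]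
  right_inv := by rintro ⟨b, j⟩; simp [Bool.xor_assoc]

/-- The signed permutation associated to `(ε, σ)`. -/
def toB (ε : Fin n → Bool) (σ : Equiv.Perm (Fin n)) : Equiv.Perm ℤ :=
  (pPerm ε σ).extendDomain encE

lemma toB_not_subtype (ε : Fin n → Bool) (σ : Equiv.Perm (Fin n)) {i : ℤ}
    (h : ¬(i ≠ 0 ∧ i.natAbs ≤ n)) : toB ε σ i = i :=
  Equiv.Perm.extendDomain_apply_not_subtype (pPerm ε σ) encE h

lemma toB_zero (ε : Fin n → Bool) (σ : Equiv.Perm (Fin n)) : toB ε σ 0 = 0 :=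
  toB_not_subtype ε σ (by simp)

lemma encE_false (j : Fin n) : ((encE (n := n) (false, j) : {i : ℤ // i ≠ 0 ∧ i.natAbs ≤ n}) : ℤ)
    = ((j : ℕ) + 1 : ℤ) := rfl

lemma encE_true (j : Fin n) : ((encE (n := n) (true, j) : {i : ℤ // i ≠ 0 ∧ i.natAbs ≤ n}) : ℤ)
    = -((j : ℕ) + 1 : ℤ) := rfl

lemma encE_apply_iota (ε : Fin n → Bool) (v : Fin n) :
    ((encE (ε v, v) : {i : ℤ // i ≠ 0 ∧ i.natAbs ≤ n}) : ℤ) = iota ε v := by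
  cases h : ε v <;> simp [encE, iota, h]

lemma toB_pos (ε : Fin n → Bool) (σ : Equiv.Perm (Fin n)) (j : Fin n) :
    toB ε σ ((j : ℕ) + 1 : ℤ) = iota ε (σ j) := by
  have h := Equiv.Perm.extendDomain_apply_image (pPerm ε σ) encE (false, j)
  rw [encE_false] at h
  rw [toB, h]
  have : (pPerm ε σ) (false, j) = (ε (σ j), σ j) := by simp [pPerm]
  rw [this, encE_apply_iota]

lemma toB_neg (ε : Fin n → Bool) (σ : Equiv.Perm (Fin n)) (j : Fin n) :
    toB ε σ (-((j : ℕ) + 1 : ℤ)) = -iota ε (σ j) := by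
  have h := Equiv.Perm.extendDomain_apply_image (pPerm ε σ) encE (true, j)
  rw [encE_true] at h
  rw [toB, h]
  have : (pPerm ε σ) (true, j) = (!(ε (σ j)), σ j) := by simp [pPerm]
  rw [this]
  cases hv : ε (σ j) <;> simp [encE, iota, hv]


lemma toB_mem (ε : Fin n → Bool) (σ : Equiv.Perm (Fin n)) : toB ε σ ∈ Bgroup n := by
  constructor
  · intro i
    rcases eq_or_ne i 0 with rfl | h0
    · rw [neg_zero, toB_zero]; omega
    by_cases hle : i.natAbs ≤ n
    · have hlt : i.natAbs - 1 < n := by omega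
      have hjv : ((⟨i.natAbs - 1, hlt⟩ : Fin n) : ℕ) = i.natAbs - 1 := rfl
      rcases lt_or_gt_of_ne h0 with hneg | hpos
      · have hi : i = -((((⟨i.natAbs - 1, hlt⟩ : Fin n) : ℕ) : ℤ) + 1) := by omega
        rw [hi, neg_neg, toB_pos, toB_neg, neg_neg]
      · have hi : i = (((⟨i.natAbs - 1, hlt⟩ : Fin n) : ℕ) : ℤ) + 1 := by omega
        rw [hi, toB_neg, toB_pos]
    · rw [toB_not_subtype ε σ (by omega), toB_not_subtype ε σ (by omega)]
  · intro i hi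
    have habs : |i| = (i.natAbs : ℤ) := Int.abs_eq_natAbs i
    exact toB_not_subtype ε σ (by omega)

lemma toB_injective :
    Function.Injective (fun x : (Fin n → Bool) × Equiv.Perm (Fin n) => toB x.1 x.2) := by
  rintro ⟨ε, σ⟩ ⟨ε', σ'⟩ h
  simp only at h
  have hval : ∀ j, iota ε (σ j) = iota ε' (σ' j) := fun j => by
    rw [← toB_pos ε σ j, ← toB_pos ε' σ' j, h]
  have hσ : σ = σ' := by
    apply Equiv.ext; intro j
    have h2 := congrArg Int.natAbs (hval j)
    rw [iota_natAbs, iota_natAbs] at h2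
    exact Fin.ext (by omega)
  subst hσ
  have hε : ε = ε' := by
    funext v
    have h1 := hval (σ.symm v)
    rw [Equiv.apply_symm_apply] at h1
    unfold iota at h1
    cases hv : ε v <;> cases hv' : ε' v <;> rw [hv, hv'] at h1 <;>
      simp only [Bool.false_eq_true, if_false, if_true] at h1 <;>
      first | rfl | (exfalso; omega)
  rw [hε]

lemma pi_zero (π : Equiv.Perm ℤ) (hπ : IsSignedPerm n π) : π 0 = 0 := by
  have h := hπ.1 0
  rw [neg_zero] at h
  omega

lemma pi_natAbs (π : Equiv.Perm ℤ) (hπ : IsSignedPerm n π) (j : Fin n) :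
    1 ≤ (π (((j : ℕ) : ℤ) + 1)).natAbs ∧ (π (((j : ℕ) : ℤ) + 1)).natAbs ≤ n := by
  have hjlt := j.isLt
  have h0 : π (((j : ℕ) : ℤ) + 1) ≠ 0 := by
    intro h
    have := π.injective (h.trans (pi_zero π hπ).symm)
    omega
  constructor
  · omega
  · by_contra hgt
    have habs : |π (((j : ℕ) : ℤ) + 1)| = ((π (((j : ℕ) : ℤ) + 1)).natAbs : ℤ) :=
      Int.abs_eq_natAbs _
    have hfix := hπ.2 (π (((j : ℕ) : ℤ) + 1)) (by omega)
    have := π.injective hfix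
    omega

lemma toB_surjective (π : Equiv.Perm ℤ) (hπ : IsSignedPerm n π) :
    ∃ (ε : Fin n → Bool) (σ : Equiv.Perm (Fin n)), toB ε σ = π := by
  set ε : Fin n → Bool := fun v => decide (0 < π.symm (-(((v : ℕ) : ℤ) + 1))) with hε
  have hb : ∀ j : Fin n,
      1 ≤ (π (((j : ℕ) : ℤ) + 1)).natAbs ∧ (π (((j : ℕ) : ℤ) + 1)).natAbs ≤ n :=
    pi_natAbs π hπ
  set g : Fin n → Fin n :=
    fun j => ⟨(π (((j : ℕ) : ℤ) + 1)).natAbs - 1, by have := hb j; omega⟩ with hg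
  have hgv : ∀ j : Fin n, ((g j : Fin n) : ℕ) = (π (((j : ℕ) : ℤ) + 1)).natAbs - 1 := by
    intro j; rw [hg]
  have hginj : Function.Injective g := by
    intro a b hab
    have ha := hb a
    have hbb := hb b
    have h1 : (π (((a : ℕ) : ℤ) + 1)).natAbs = (π (((b : ℕ) : ℤ) + 1)).natAbs := by
      have := congrArg Fin.val hab
      rw [hgv a, hgv b] at this
      omega
    have h2 : π (((a : ℕ) : ℤ) + 1) = π (((b : ℕ) : ℤ) + 1) ∨
        π (((a : ℕ) : ℤ) + 1) = -π (((b : ℕ) : ℤ) + 1) := by omega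
    rcases h2 with h | h
    · exact Fin.ext (by have := π.injective h; omega)
    · rw [← hπ.1] at h
      have := π.injective h
      omega
  set σ : Equiv.Perm (Fin n) :=
    Equiv.ofBijective g (Finite.injective_iff_bijective.mp hginj) with hσ
  have hσg : ∀ j, σ j = g j := fun j => rfl
  have hcore : ∀ j : Fin n, iota ε (g j) = π (((j : ℕ) : ℤ) + 1) := by
    intro j
    have hb1 := hb j
    have hgv1 := hgv j
    have hz0 : π (((j : ℕ) : ℤ) + 1) ≠ 0 := by omega
    rcases lt_or_gt_of_ne hz0 with hneg | hpos
    · have h1 : -(((g j : ℕ) : ℤ) + 1) = π (((j : ℕ) : ℤ) + 1) := by omega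
      have hsym : π.symm (-(((g j : ℕ) : ℤ) + 1)) = ((j : ℕ) : ℤ) + 1 := by
        rw [h1, Equiv.symm_apply_apply]
      unfold iota
      split
      · omega
      · rename_i hif
        simp only [hε, decide_eq_true_eq] at hif
        rw [hsym] at hif
        omega
    · have h1 : (((g j : ℕ) : ℤ) + 1) = π (((j : ℕ) : ℤ) + 1) := by omega
      have h2 : -(((g j : ℕ) : ℤ) + 1) = π (-(((j : ℕ) : ℤ) + 1)) := by
        rw [hπ.1]; omega
      have hsym : π.symm (-(((g j : ℕ) : ℤ) + 1)) = -(((j : ℕ) : ℤ) + 1) := by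
        rw [h2, Equiv.symm_apply_apply]
      unfold iota
      split
      · rename_i hif
        simp only [hε, decide_eq_true_eq] at hif
        rw [hsym] at hif
        omega
      · omega
  refine ⟨ε, σ, ?_⟩
  apply Equiv.ext
  intro i
  by_cases hc : i ≠ 0 ∧ i.natAbs ≤ n
  · rcases hc with ⟨h0, hle⟩
    have hlt : i.natAbs - 1 < n := by omega
    have hjv : ((⟨i.natAbs - 1, hlt⟩ : Fin n) : ℕ) = i.natAbs - 1 := rfl
    rcases lt_or_gt_of_ne h0 with hneg | hpos
    · have hi : i = -((((⟨i.natAbs - 1, hlt⟩ : Fin n) : ℕ) : ℤ) + 1) := by omega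
      rw [hi, toB_neg, hπ.1]
      exact neg_inj.mpr ((hσg _ ▸ hcore ⟨i.natAbs - 1, hlt⟩ : _))
    · have hi : i = (((⟨i.natAbs - 1, hlt⟩ : Fin n) : ℕ) : ℤ) + 1 := by omega
      rw [hi, toB_pos]
      exact (hσg _ ▸ hcore ⟨i.natAbs - 1, hlt⟩ : _)
  · push_neg at hc
    rcases eq_or_ne i 0 with rfl | h0
    · rw [toB_zero, pi_zero π hπ]
    · have hgt := hc h0
      have habs : |i| = (i.natAbs : ℤ) := Int.abs_eq_natAbs i
      rw [toB_not_subtype ε σ (by omega), hπ.2 i (by omega)]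


/-- Cyclic descent count of a permutation of `Fin (n+1)`. -/
def cyc (g : Equiv.Perm (Fin (n + 1))) : ℕ :=
  (Finset.univ.filter fun i : Fin (n + 1) => g (i + 1) < g i).card

lemma cyc_rot (g : Equiv.Perm (Fin (n + 1))) (p : Fin (n + 1)) :
    cyc ((Equiv.addRight p).trans g) = cyc g := by
  unfold cyc
  apply Finset.card_bij' (fun i _ => i + p) (fun i _ => i - p)
  · intro a ha
    simp only [Finset.mem_filter, Finset.mem_univ, true_and] at ha ⊢
    simp only [Equiv.trans_apply, Equiv.coe_addRight] at ha ⊢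
    rwa [add_right_comm] at ha
  · intro a ha
    simp only [Finset.mem_filter, Finset.mem_univ, true_and] at ha ⊢
    simp only [Equiv.trans_apply, Equiv.coe_addRight] at ha ⊢
    rwa [add_right_comm, sub_add_cancel]
  · intro a _; exact add_sub_cancel_right a p
  · intro a _; exact sub_add_cancel a p

lemma cdesB_eq (π : Equiv.Perm ℤ) (hz : π 0 = 0) :
    cdesB n π = (Finset.univ.filter fun i : Fin (n + 1) =>
      π (((i + 1 : Fin (n + 1)) : ℕ) : ℤ) < π ((i : ℕ) : ℤ)).card := by
  unfold cdesB desB desSetB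
  rw [Finset.card_filter, Finset.card_filter, Fin.sum_univ_castSucc]
  congr 1
  · rw [← Fin.sum_univ_eq_sum_range (fun s => if π ((s : ℤ) + 1) < π (s : ℤ) then 1 else 0) n]
    apply Finset.sum_congr rfl
    intro j _
    have h1 : ((j.castSucc + 1 : Fin (n + 1)) : ℕ) = (j : ℕ) + 1 := by
      rw [Fin.coeSucc_eq_succ, Fin.val_succ]
    have h2 : ((j.castSucc : Fin (n + 1)) : ℕ) = (j : ℕ) := Fin.coe_castSucc j
    rw [h1, h2]
    push_cast
    rfl
  · have h1 : ((Fin.last n + 1 : Fin (n + 1)) : ℕ) = 0 := by rw [Fin.last_add_one]; rfl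
    have h2 : ((Fin.last n : Fin (n + 1)) : ℕ) = n := rfl
    rw [h1, h2]
    norm_num [hz]

lemma cfun_val (ε : Fin n → Bool) (σ : Equiv.Perm (Fin n)) (i : Fin (n + 1)) :
    ((cfun ε σ i : ℤ)) = toB ε σ (((i : ℕ) : ℤ)) := by
  unfold cfun
  split
  · rename_i h; subst h; simp [toB_zero]
  · rename_i h
    have hi0 : (i : ℕ) ≠ 0 := by
      intro hh
      exact h (Fin.ext (by rw [hh]; rfl))
    have hp : ((i.pred h : Fin n) : ℕ) = (i : ℕ) - 1 := rfl
    have hv : ((i : ℕ) : ℤ) = (((i.pred h : Fin n) : ℕ) : ℤ) + 1 := by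
      rw [hp]; omega
    rw [hv, toB_pos]

lemma cyc_dperm (ε : Fin n → Bool) (σ : Equiv.Perm (Fin n)) :
    cyc (dperm ε σ) = cdesB n (toB ε σ) := by
  rw [cdesB_eq _ (toB_zero ε σ)]
  unfold cyc
  congr 1
  apply Finset.filter_congr
  intro i _
  simp only [dperm_apply, OrderIso.lt_iff_lt, ← Subtype.coe_lt_coe, cfun_val]


lemma pval_of (σ : Equiv.Perm (Fin n)) (s : ℕ) (h1 : 1 ≤ s) (h2 : s ≤ n) (hlt : s - 1 < n) :
    pval σ s = (σ ⟨s - 1, hlt⟩ : ℕ) + 1 := by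
  unfold pval
  rw [dif_pos ⟨h1, h2⟩]

section pos

variable [NeZero n]

lemma fin_add_one_val {j : Fin n} (h : (j : ℕ) + 1 < n) :
    ((j + 1 : Fin n) : ℕ) = (j : ℕ) + 1 := by
  simp only [Fin.add_def, Fin.val_one']
  have h1 : 1 % n = 1 := Nat.mod_eq_of_lt (by omega)
  rw [h1, Nat.mod_eq_of_lt h]

lemma des_eq (σT : Equiv.Perm (Fin n)) :
    des σT = (Finset.univ.filter fun j : Fin n =>
      (j : ℕ) + 1 < n ∧ σT (j + 1) < σT j).card := by
  have hinj : Function.Injective (fun j : Fin n => (j : ℕ) + 1) := by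
    intro a b h
    simp only at h
    exact Fin.ext (by omega)
  rw [des, ← Finset.card_image_of_injective _ hinj]
  congr 1
  ext s
  simp only [desSet, Finset.mem_filter, Finset.mem_Ico, Finset.mem_image, Finset.mem_univ,
    true_and]
  constructor
  · rintro ⟨⟨hs1, hs2⟩, hlt⟩
    have hlt1 : s - 1 < n := by omega
    have hlt2 : s < n := by omega
    refine ⟨⟨s - 1, hlt1⟩, ⟨?_, ?_⟩, ?_⟩
    · show s - 1 + 1 < n
      omega
    · have hadd : (⟨s - 1, hlt1⟩ : Fin n) + 1 = ⟨s, hlt2⟩ := by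
        apply Fin.ext
        rw [fin_add_one_val (show ((⟨s - 1, hlt1⟩ : Fin n) : ℕ) + 1 < n by show s - 1 + 1 < n; omega)]
        show s - 1 + 1 = s
        omega
      rw [hadd, Fin.lt_def]
      rw [pval_of σT s hs1 (by omega) hlt1,
        pval_of σT (s + 1) (by omega) (by omega) hlt2] at hlt
      have hidx : (⟨s + 1 - 1, hlt2⟩ : Fin n) = ⟨s, hlt2⟩ := rfl
      rw [hidx] at hlt
      omega
    · show s - 1 + 1 = s
      omega
  · rintro ⟨j, ⟨hjlt, hjdesc⟩, rfl⟩
    have hj0 : (0 : ℕ) < (j : ℕ) + 1 := by omega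
    refine ⟨⟨by omega, by omega⟩, ?_⟩
    rw [pval_of σT ((j : ℕ) + 1) (by omega) (by omega) (by omega),
      pval_of σT ((j : ℕ) + 1 + 1) (by omega) (by omega) (by omega)]
    have h1 : (⟨(j : ℕ) + 1 - 1, by omega⟩ : Fin n) = j := Fin.ext rfl
    have h2 : (⟨(j : ℕ) + 1 + 1 - 1, by omega⟩ : Fin n) = j + 1 := by
      have hv := fin_add_one_val hjlt
      apply Fin.ext
      show (j : ℕ) + 1 + 1 - 1 = ((j + 1 : Fin n) : ℕ)
      rw [hv]
      omega
    rw [h1, h2]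
    rw [Fin.lt_def] at hjdesc
    exact Nat.succ_lt_succ hjdesc

def tauFun (u : Equiv.Perm (Fin (n + 1))) : Fin n → Fin n :=
  fun j => if h : (u j.succ : ℕ) < n then ⟨(u j.succ : ℕ), h⟩ else j

lemma tauFun_lt (u : Equiv.Perm (Fin (n + 1))) (hu : u 0 = Fin.last n) (j : Fin n) :
    (u j.succ : ℕ) < n := by
  have h1 : u j.succ ≠ Fin.last n := by
    rw [← hu]; intro h; exact (Fin.succ_ne_zero j) (u.injective h)
  have h2 := (u j.succ).isLt
  have h3 : (u j.succ : ℕ) ≠ n := fun hh => h1 (Fin.ext (by rw [hh]; rfl))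
  omega

lemma tauFun_apply (u : Equiv.Perm (Fin (n + 1))) (hu : u 0 = Fin.last n) (j : Fin n) :
    tauFun u j = ⟨(u j.succ : ℕ), tauFun_lt u hu j⟩ := dif_pos _

lemma tauFun_injective (u : Equiv.Perm (Fin (n + 1))) (hu : u 0 = Fin.last n) :
    Function.Injective (tauFun u) := by
  intro a b h
  rw [tauFun_apply u hu, tauFun_apply u hu, Fin.mk.injEq] at h
  exact Fin.succ_injective _ (u.injective (Fin.ext h))

def tauPerm (u : Equiv.Perm (Fin (n + 1))) (hu : u 0 = Fin.last n) : Equiv.Perm (Fin n) :=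
  Equiv.ofBijective (tauFun u) (Finite.injective_iff_bijective.mp (tauFun_injective u hu))

lemma tauPerm_apply (u : Equiv.Perm (Fin (n + 1))) (hu : u 0 = Fin.last n) (j : Fin n) :
    ((tauPerm u hu j : Fin n) : ℕ) = (u j.succ : ℕ) := by
  show ((tauFun u j : Fin n) : ℕ) = _
  rw [tauFun_apply u hu]

lemma cyc_eq_des (u : Equiv.Perm (Fin (n + 1))) (hu : u 0 = Fin.last n) :
    cyc u = des (tauPerm u hu) + 1 := by
  have hn1 : 1 ≤ n := Nat.pos_of_ne_zero (NeZero.ne n)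
  rw [des_eq]
  unfold cyc
  rw [Finset.card_filter, Finset.card_filter, Fin.sum_univ_succ]
  rw [add_comm]
  congr 1
  · -- middle terms
    apply Finset.sum_congr rfl
    intro j _
    apply if_congr _ rfl rfl
    by_cases hj : (j : ℕ) + 1 < n
    · have hs : (j.succ + 1 : Fin (n + 1)) = (j + 1 : Fin n).succ := by
        apply Fin.ext
        rw [fin_add_one_val (n := n + 1) (j := j.succ) (by rw [Fin.val_succ]; omega),
          Fin.val_succ, Fin.val_succ, fin_add_one_val hj]
      rw [hs]
      constructor
      · intro hlt
        refine ⟨hj, ?_⟩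
        rw [Fin.lt_def, tauPerm_apply u hu, tauPerm_apply u hu]
        exact hlt
      · rintro ⟨-, hlt⟩
        rw [Fin.lt_def, tauPerm_apply u hu, tauPerm_apply u hu] at hlt
        exact hlt
    · have hjn : (j : ℕ) + 1 = n := by have := j.isLt; omega
      have hsucc : j.succ = Fin.last n := by
        apply Fin.ext; rw [Fin.val_succ]; exact hjn
      apply iff_of_false
      · rw [hsucc, Fin.last_add_one, hu]
        exact fun h => absurd (Fin.le_last (u (Fin.last n))) (not_le.mpr h)
      · rintro ⟨h, -⟩; omega
  · -- first term
    have h01 : u (0 + 1) < u 0 := by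
      rw [zero_add, hu]
      have hne : u 1 ≠ Fin.last n := by
        rw [← hu]
        intro h
        have := u.injective h
        have hval := congrArg Fin.val this
        rw [Fin.val_one' (n + 1)] at hval
        simp only [Fin.val_zero] at hval
        have hmod : 1 % (n + 1) = 1 := Nat.mod_eq_of_lt (by omega)
        omega
      have := Fin.le_last (u 1)
      exact lt_of_le_of_ne this hne
    rw [if_pos h01]

def rotu (ε : Fin n → Bool) (σ : Equiv.Perm (Fin n)) : Equiv.Perm (Fin (n + 1)) :=
  (Equiv.addRight ((dperm ε σ)⁻¹ (Fin.last n))).trans (dperm ε σ)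

lemma rotu_zero (ε : Fin n → Bool) (σ : Equiv.Perm (Fin n)) : rotu ε σ 0 = Fin.last n := by
  simp only [rotu, Equiv.trans_apply, Equiv.coe_addRight, zero_add]
  exact Equiv.apply_symm_apply _ _

def Phi (x : (Fin n → Bool) × Equiv.Perm (Fin n)) : (Fin n → Bool) × Equiv.Perm (Fin n) :=
  (x.1, tauPerm (rotu x.1 x.2) (rotu_zero x.1 x.2))

lemma cdesB_toB_eq (ε : Fin n → Bool) (σ : Equiv.Perm (Fin n)) :
    cdesB n (toB ε σ) = des (Phi (ε, σ)).2 + 1 := by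
  rw [← cyc_dperm, ← cyc_rot (dperm ε σ) ((dperm ε σ)⁻¹ (Fin.last n))]
  exact cyc_eq_des (rotu ε σ) (rotu_zero ε σ)


lemma rotu_apply (ε : Fin n → Bool) (σ : Equiv.Perm (Fin n)) (i : Fin (n + 1)) :
    rotu ε σ i = dperm ε σ (i + (dperm ε σ)⁻¹ (Fin.last n)) := rfl

lemma Phi_injective :
    Function.Injective (Phi : ((Fin n → Bool) × Equiv.Perm (Fin n)) → _) := by
  rintro ⟨ε, σ⟩ ⟨ε', σ'⟩ h
  have hε : ε = ε' := congrArg Prod.fst h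
  subst hε
  have hτ : tauPerm (rotu ε σ) (rotu_zero ε σ) = tauPerm (rotu ε σ') (rotu_zero ε σ') :=
    congrArg Prod.snd h
  have hu : rotu ε σ = rotu ε σ' := by
    apply Equiv.ext
    intro i
    rcases Fin.eq_zero_or_eq_succ i with rfl | ⟨j, rfl⟩
    · rw [rotu_zero, rotu_zero]
    · apply Fin.ext
      rw [← tauPerm_apply (rotu ε σ) (rotu_zero ε σ) j,
        ← tauPerm_apply (rotu ε σ') (rotu_zero ε σ') j, hτ]
  have hdx : ∀ i, dperm ε σ i = rotu ε σ (i - (dperm ε σ)⁻¹ (Fin.last n)) := by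
    intro i; rw [rotu_apply, sub_add_cancel]
  have hdy : ∀ i, dperm ε σ' i = rotu ε σ' (i - (dperm ε σ')⁻¹ (Fin.last n)) := by
    intro i; rw [rotu_apply, sub_add_cancel]
  have hpx : rotu ε σ (-((dperm ε σ)⁻¹ (Fin.last n))) = (eIso ε).symm ⟨0, zero_mem_Aset ε⟩ := by
    rw [rotu_apply, neg_add_cancel, dperm_zero]
  have hpy : rotu ε σ' (-((dperm ε σ')⁻¹ (Fin.last n))) = (eIso ε).symm ⟨0, zero_mem_Aset ε⟩ := by
    rw [rotu_apply, neg_add_cancel, dperm_zero]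
  have hp : (dperm ε σ)⁻¹ (Fin.last n) = (dperm ε σ')⁻¹ (Fin.last n) := by
    have h1 : rotu ε σ (-((dperm ε σ)⁻¹ (Fin.last n))) =
        rotu ε σ (-((dperm ε σ')⁻¹ (Fin.last n))) := by
      rw [hpx, hu, hpy]
    have h2 := (rotu ε σ).injective h1
    exact neg_inj.mp h2
  have hd : dperm ε σ = dperm ε σ' := by
    apply Equiv.ext
    intro i
    rw [hdx, hdy, hp, hu]
  have hσ : σ = σ' := by
    apply Equiv.ext
    intro j
    have h1 : dperm ε σ j.succ = dperm ε σ' j.succ := by rw [hd]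
    rw [dperm_apply, dperm_apply] at h1
    have h2 := (eIso ε).toEquiv.symm.injective h1
    unfold cfun at h2
    rw [dif_neg (Fin.succ_ne_zero j), dif_neg (Fin.succ_ne_zero j)] at h2
    have h3 := iota_injective ε (Subtype.ext_iff.mp h2)
    rw [Fin.pred_succ] at h3
    exact h3
  rw [hσ]

end pos

/-- The encoding map into the subgroup. -/
def pairToB (x : (Fin n → Bool) × Equiv.Perm (Fin n)) : ↥(Bgroup n) :=
  ⟨toB x.1 x.2, toB_mem x.1 x.2⟩

lemma pairToB_bijective : Function.Bijective (pairToB (n := n)) := by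
  constructor
  · intro a b hab
    exact toB_injective (congrArg Subtype.val hab)
  · rintro ⟨π, hπ⟩
    obtain ⟨ε, σ, hh⟩ := toB_surjective π hπ
    exact ⟨(ε, σ), Subtype.ext hh⟩

end Aux14


theorem stmt14 (n : ℕ) (hn : 1 ≤ n) :
    (∀ i : ℕ, i ≤ n - 1 →
      Nat.card {π : ↥(Bgroup n) // cdesB n (π : Equiv.Perm ℤ) = i + 1} =
        2 ^ n * Nat.card {π : Equiv.Perm (Fin n) // des π = i}) ∧
    (∑ᶠ π : ↥(Bgroup n), (Polynomial.X : Polynomial ℚ) ^ cdesB n (π : Equiv.Perm ℤ)) =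
      2 ^ n * ∑ π : Equiv.Perm (Fin n), (Polynomial.X : Polynomial ℚ) ^ (des π + 1) := by
  haveI : NeZero n := ⟨by omega⟩
  let E : ((Fin n → Bool) × Equiv.Perm (Fin n)) ≃ ↥(Bgroup n) := Equiv.ofBijective _ Aux14.pairToB_bijective
  let F : ((Fin n → Bool) × Equiv.Perm (Fin n)) ≃ ((Fin n → Bool) × Equiv.Perm (Fin n)) := Equiv.ofBijective Aux14.Phi
    (Finite.injective_iff_bijective.mp Aux14.Phi_injective)
  have key : ∀ x : (Fin n → Bool) × Equiv.Perm (Fin n), cdesB n ((E x : Equiv.Perm ℤ)) = des (F x).2 + 1 := by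
    intro x
    exact Aux14.cdesB_toB_eq x.1 x.2
  haveI : Finite ↥(Bgroup n) := Finite.of_equiv _ E
  letI : Fintype ↥(Bgroup n) := Fintype.ofFinite _
  have hcard2 : Nat.card (Fin n → Bool) = 2 ^ n := by
    simp [Nat.card_eq_fintype_card]
  constructor
  · intro i _
    have e1 : {x : (Fin n → Bool) × Equiv.Perm (Fin n) // des (F x).2 = i} ≃
        {π : ↥(Bgroup n) // cdesB n (π : Equiv.Perm ℤ) = i + 1} := by
      refine Equiv.subtypeEquiv E fun x => ?_
      rw [key x]
      omega
    have e2 : {x : (Fin n → Bool) × Equiv.Perm (Fin n) // des (F x).2 = i} ≃ {y : (Fin n → Bool) × Equiv.Perm (Fin n) // des y.2 = i} :=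
      Equiv.subtypeEquiv F fun x => Iff.rfl
    have e3 : {y : (Fin n → Bool) × Equiv.Perm (Fin n) // des y.2 = i} ≃
        ((Fin n → Bool) × {σ : Equiv.Perm (Fin n) // des σ = i}) :=
      { toFun := fun z => (z.1.1, ⟨z.1.2, z.2⟩)
        invFun := fun w => ⟨(w.1, w.2.1), w.2.2⟩
        left_inv := fun z => rfl
        right_inv := fun w => rfl }
    rw [← Nat.card_congr e1, Nat.card_congr (e2.trans e3), Nat.card_prod, hcard2]
  · rw [finsum_eq_sum_of_fintype]
    rw [← Equiv.sum_comp E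
      (fun π : ↥(Bgroup n) => (Polynomial.X : Polynomial ℚ) ^ cdesB n (π : Equiv.Perm ℤ))]
    have hstep : ∀ x : (Fin n → Bool) × Equiv.Perm (Fin n), (Polynomial.X : Polynomial ℚ) ^ cdesB n ((E x : Equiv.Perm ℤ)) =
        (Polynomial.X : Polynomial ℚ) ^ (des (F x).2 + 1) := fun x => by rw [key x]
    rw [Finset.sum_congr rfl fun x _ => hstep x]
    have hF := Equiv.sum_comp F (fun y : (Fin n → Bool) × Equiv.Perm (Fin n) => (Polynomial.X : Polynomial ℚ) ^ (des y.2 + 1))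
    rw [hF, Fintype.sum_prod_type]
    have hconst : ∀ ε : Fin n → Bool,
        (∑ σ : Equiv.Perm (Fin n), (Polynomial.X : Polynomial ℚ) ^ (des σ + 1)) =
        ∑ σ : Equiv.Perm (Fin n), (Polynomial.X : Polynomial ℚ) ^ (des σ + 1) := fun _ => rfl
    dsimp only
    rw [Finset.sum_const]
    rw [Finset.card_univ, Fintype.card_fun, Fintype.card_bool, Fintype.card_fin, nsmul_eq_mul]
    push_cast
    ring
end
end
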